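/- Let G be a strongly connected directed graph on vertex set {1,2,3}. Define M(i,j,0) = 0 and, for n ≥ 1 with k = 6−i−j: M(i,j,n) = M(i,k,n−1) + M(k,j,n−1) + 1 if (i,j) ∈ E, and M(i,j,n) = 2·M(i,j,n−1) + M(j,i,n−1) + 2 otherwise. Then M(i,j,n) is nondecreasing in n: M(i,j,n−1) ≤ M(i,j,n) for all n ≥ 1 and all i ≠ j. -/
import Mathlib


/-- For a strongly connected digraph `E` on the pegs `{1,2,3}`, the function `M` defined by
the `DirectedMove` recurrence is nondecreasing in the number of discs. -/
theorem M_monotone (E : ℕ → ℕ → Prop)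
    (hconn : ∀ i j, i ∈ ({1, 2, 3} : Set ℕ) → j ∈ ({1, 2, 3} : Set ℕ) →
      Relation.ReflTransGen
        (fun a b => a ∈ ({1, 2, 3} : Set ℕ) ∧ b ∈ ({1, 2, 3} : Set ℕ) ∧ E a b) i j)
    (M : ℕ → ℕ → ℕ → ℕ)
    (h0 : ∀ i j, M i j 0 = 0)
    (hrecE : ∀ i j n, i ∈ ({1, 2, 3} : Set ℕ) → j ∈ ({1, 2, 3} : Set ℕ) → i ≠ j → 1 ≤ n →
      E i j → M i j n = M i (6 - i - j) (n - 1) + M (6 - i - j) j (n - 1) + 1)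
    (hrecN : ∀ i j n, i ∈ ({1, 2, 3} : Set ℕ) → j ∈ ({1, 2, 3} : Set ℕ) → i ≠ j → 1 ≤ n →
      ¬ E i j → M i j n = 2 * M i j (n - 1) + M j i (n - 1) + 2) :
    ∀ i j n, i ∈ ({1, 2, 3} : Set ℕ) → j ∈ ({1, 2, 3} : Set ℕ) → i ≠ j → 1 ≤ n →
      M i j (n - 1) ≤ M i j n := by
  have key : ∀ n i j, i ∈ ({1, 2, 3} : Set ℕ) → j ∈ ({1, 2, 3} : Set ℕ) → i ≠ j → 1 ≤ n →
      M i j (n - 1) ≤ M i j n := by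
    intro n
    induction n with
    | zero => intro i j _ _ _ h; omega
    | succ m ih =>
      intro i j hi hj hij _
      rcases Nat.eq_zero_or_pos m with rfl | hm
      · simp only [Nat.add_sub_cancel, h0]
        exact Nat.zero_le _
      · have hkfacts : (6 - i - j) ∈ ({1, 2, 3} : Set ℕ) ∧ 6 - i - j ≠ i ∧ 6 - i - j ≠ j := by
          simp only [Set.mem_insert_iff, Set.mem_singleton_iff] at hi hj ⊢
          omega
        obtain ⟨hk1, hk2, hk3⟩ := hkfacts
        simp only [Nat.add_sub_cancel]
        by_cases hE : E i j
        · rw [hrecE i j (m + 1) hi hj hij (by omega) hE, hrecE i j m hi hj hij hm hE]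
          simp only [Nat.add_sub_cancel]
          have h1 := ih i (6 - i - j) hi hk1 (Ne.symm hk2) hm
          have h2 := ih (6 - i - j) j hk1 hj hk3 hm
          omega
        · rw [hrecN i j (m + 1) hi hj hij (by omega) hE, hrecN i j m hi hj hij hm hE]
          simp only [Nat.add_sub_cancel]
          have h1 := ih i j hi hj hij hm
          have h2 := ih j i hj hi (Ne.symm hij) hm
          omega
  intro i j n hi hj hij hn
  exact key n i j hi hj hij hn
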